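/- Let n ≥ b ≥ 3 and α ∈ [0,1). Let G⋆ be a connected K_{1,b}-minor free graph on n vertices attaining the maximum A_α-spectral radius among all connected K_{1,b}-minor free graphs on n vertices, let x be the positive Perron eigenvector of A_α(G⋆) for λ_α(G⋆), and let v* be a vertex with maximum coordinate x_{v*}. Then the degree of v* in G⋆ equals b − 1, i.e., |N_{G⋆}(v*)| = b − 1. -/

import Mathlib

open scoped Classical


/-- `H` is a minor of `G` (branch-set / minor-model definition). -/
def SimpleGraph.IsMinor {W V : Type*} (H : SimpleGraph W) (G : SimpleGraph V) : Prop :=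
  ∃ f : W → Set V,
    (∀ w, (f w).Nonempty) ∧
    (∀ w, (G.induce (f w)).Connected) ∧
    (∀ w₁ w₂, w₁ ≠ w₂ → Disjoint (f w₁) (f w₂)) ∧
    (∀ w₁ w₂, H.Adj w₁ w₂ → ∃ v₁ ∈ f w₁, ∃ v₂ ∈ f w₂, G.Adj v₁ v₂)

/-- `G` has no `K_{a,b}`-minor. -/
def kabMinorFree (a b : ℕ) {V : Type*} (G : SimpleGraph V) : Prop :=
  ¬ (completeBipartiteGraph (Fin a) (Fin b)).IsMinor G

/-- The `A_α`-matrix `α·D(G) + (1-α)·A(G)` of a graph. -/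
noncomputable def aMatrix {V : Type*} [Fintype V] (G : SimpleGraph V) (α : ℝ) :
    Matrix V V ℝ :=
  Matrix.of fun u w =>
    (if u = w then α * ∑ z, (if G.Adj w z then (1 : ℝ) else 0) else 0)
    + (if G.Adj u w then (1 - α) else 0)

/-- The `A_α`-spectral radius: the largest eigenvalue of the `A_α`-matrix. -/
noncomputable def lambdaAlpha {V : Type*} [Fintype V] [DecidableEq V]
    (G : SimpleGraph V) (α : ℝ) : ℝ :=
  sSup (spectrum ℝ (aMatrix G α))


/-- `τ = ⌊(b+1)/(a+1)⌋`, the number of stars of the star forest `F_{a,b}`. -/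
def tauOf (a b : ℕ) : ℕ := (b + 1) / (a + 1)

/-- The star forest `F_{a,b}` on `b+1` vertices: the disjoint union of
`τ = ⌊(b+1)/(a+1)⌋` stars, `τ-1` of them isomorphic to `K_{1,a}` and one
isomorphic to `K_{1,c}` with `c = b - (a+1)(τ-1)`.  Vertex `i` belongs to the
block `min (i/(a+1)) (τ-1)`, first `τ-1` blocks of size `a+1`, whose first
vertex is the center of its star. -/
def starForest (a b : ℕ) : SimpleGraph (Fin (b + 1)) where
  Adj i j := i ≠ j ∧
    min ((i : ℕ) / (a + 1)) (tauOf a b - 1) = min ((j : ℕ) / (a + 1)) (tauOf a b - 1) ∧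
    ((i : ℕ) = min ((i : ℕ) / (a + 1)) (tauOf a b - 1) * (a + 1) ∨
     (j : ℕ) = min ((j : ℕ) / (a + 1)) (tauOf a b - 1) * (a + 1))
  symm := by
    constructor
    intro i j h
    exact ⟨h.1.symm, h.2.1.symm, h.2.2.symm⟩
  loopless := by constructor; intro i h; exact h.1 rfl

/-- `S^k(K_b)`: the complete graph `K_b` with one edge (between vertices `0`
and `1`) subdivided `k` times. -/
def subdividedComplete (b k : ℕ) : SimpleGraph (Fin b ⊕ Fin k) where
  Adj x y :=
    match x, y with
    | Sum.inl i, Sum.inl j =>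
        i ≠ j ∧ (k = 0 ∨ ¬(((i : ℕ) = 0 ∧ (j : ℕ) = 1) ∨ ((i : ℕ) = 1 ∧ (j : ℕ) = 0)))
    | Sum.inl i, Sum.inr p => ((i : ℕ) = 0 ∧ (p : ℕ) = 0) ∨ ((i : ℕ) = 1 ∧ (p : ℕ) = k - 1)
    | Sum.inr p, Sum.inl i => ((i : ℕ) = 0 ∧ (p : ℕ) = 0) ∨ ((i : ℕ) = 1 ∧ (p : ℕ) = k - 1)
    | Sum.inr p, Sum.inr q => (p : ℕ) + 1 = (q : ℕ) ∨ (q : ℕ) + 1 = (p : ℕ)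
  symm := by
    constructor
    rintro (i | p) (j | q) h
    · exact ⟨h.1.symm, by tauto⟩
    · exact h
    · exact h
    · tauto
  loopless := by
    constructor
    rintro (i | p) h
    · exact h.1 rfl
    · rcases h with h | h <;> omega

/-- The graph `F(a₁,a₂,a₃)`: a complete graph on `a₁+a₂+a₃ = b-1` vertices with
partition `V₁ ∪ V₂ ∪ V₃` (`|Vᵢ| = aᵢ`), together with a path `v₁v₂v₃` on three
new vertices, every vertex of `Vᵢ` joined to `vᵢ`. -/
def fGraph (a₁ a₂ a₃ : ℕ) : SimpleGraph (Fin (a₁ + a₂ + a₃) ⊕ Fin 3) where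
  Adj x y :=
    match x, y with
    | Sum.inl u, Sum.inl w => u ≠ w
    | Sum.inl u, Sum.inr i =>
        ((i : ℕ) = 0 ∧ (u : ℕ) < a₁) ∨
        ((i : ℕ) = 1 ∧ a₁ ≤ (u : ℕ) ∧ (u : ℕ) < a₁ + a₂) ∨
        ((i : ℕ) = 2 ∧ a₁ + a₂ ≤ (u : ℕ))
    | Sum.inr i, Sum.inl u =>
        ((i : ℕ) = 0 ∧ (u : ℕ) < a₁) ∨
        ((i : ℕ) = 1 ∧ a₁ ≤ (u : ℕ) ∧ (u : ℕ) < a₁ + a₂) ∨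
        ((i : ℕ) = 2 ∧ a₁ + a₂ ≤ (u : ℕ))
    | Sum.inr i, Sum.inr j => (i : ℕ) + 1 = (j : ℕ) ∨ (j : ℕ) + 1 = (i : ℕ)
  symm := by
    constructor
    rintro (u | i) (w | j) h
    · exact h.symm
    · exact h
    · exact h
    · tauto
  loopless := by
    constructor
    rintro (u | i) h
    · exact h rfl
    · rcases h with h | h <;> omega

/-- The Petersen graph: outer `5`-cycle, inner pentagram, five spokes. -/
def petersen : SimpleGraph (Fin 5 ⊕ Fin 5) where
  Adj x y :=
    match x, y with
    | Sum.inl i, Sum.inl j => (j : ℕ) = ((i : ℕ) + 1) % 5 ∨ (i : ℕ) = ((j : ℕ) + 1) % 5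
    | Sum.inl i, Sum.inr j => i = j
    | Sum.inr i, Sum.inl j => i = j
    | Sum.inr i, Sum.inr j => (j : ℕ) = ((i : ℕ) + 2) % 5 ∨ (i : ℕ) = ((j : ℕ) + 2) % 5
  symm := by
    constructor
    rintro (i | i) (j | j) h
    · tauto
    · exact h.symm
    · exact h.symm
    · tauto
  loopless := by
    constructor
    rintro (i | i) h <;>
      · have hi : (i : ℕ) < 5 := i.isLt
        rcases h with h | h <;> omega

/-- The join `G ∨ H` of two graphs. -/
def joinG {V W : Type*} (G : SimpleGraph V) (H : SimpleGraph W) : SimpleGraph (V ⊕ W) where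
  Adj x y :=
    match x, y with
    | Sum.inl u, Sum.inl w => G.Adj u w
    | Sum.inl _, Sum.inr _ => True
    | Sum.inr _, Sum.inl _ => True
    | Sum.inr u, Sum.inr w => H.Adj u w
  symm := by
    constructor
    rintro (u | u) (w | w) h
    · exact h.symm
    · trivial
    · trivial
    · exact h.symm
  loopless := by
    constructor
    rintro (u | u) h
    · exact G.loopless.irrefl u h
    · exact H.loopless.irrefl u h

/-- The disjoint union of two graphs. -/
def disjUnion {V W : Type*} (G : SimpleGraph V) (H : SimpleGraph W) : SimpleGraph (V ⊕ W) where
  Adj x y :=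
    match x, y with
    | Sum.inl u, Sum.inl w => G.Adj u w
    | Sum.inl _, Sum.inr _ => False
    | Sum.inr _, Sum.inl _ => False
    | Sum.inr u, Sum.inr w => H.Adj u w
  symm := by
    constructor
    rintro (u | u) (w | w) h
    · exact h.symm
    · exact h
    · exact h
    · exact h.symm
  loopless := by
    constructor
    rintro (u | u) h
    · exact G.loopless.irrefl u h
    · exact H.loopless.irrefl u h

/-- `k` disjoint copies of the graph `H`. -/
def copies (k : ℕ) {W : Type*} (H : SimpleGraph W) : SimpleGraph (Fin k × W) where
  Adj x y := x.1 = y.1 ∧ H.Adj x.2 y.2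
  symm := by constructor; rintro x y ⟨h1, h2⟩; exact ⟨h1.symm, h2.symm⟩
  loopless := by constructor; rintro x ⟨h1, h2⟩; exact H.loopless.irrefl _ h2

/-- `K_b^e`: the complete graph `K_b` with the edge between vertices `0` and
`1` removed and a pendant vertex attached to each of `0` and `1`. -/
def kbE (b : ℕ) : SimpleGraph (Fin b ⊕ Fin 2) where
  Adj x y :=
    match x, y with
    | Sum.inl i, Sum.inl j =>
        i ≠ j ∧ ¬(((i : ℕ) = 0 ∧ (j : ℕ) = 1) ∨ ((i : ℕ) = 1 ∧ (j : ℕ) = 0))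
    | Sum.inl i, Sum.inr p => (i : ℕ) = (p : ℕ)
    | Sum.inr p, Sum.inl i => (i : ℕ) = (p : ℕ)
    | Sum.inr _, Sum.inr _ => False
  symm := by
    constructor
    rintro (i | p) (j | q) h
    · exact ⟨h.1.symm, by tauto⟩
    · exact h
    · exact h
    · exact h
  loopless := by
    constructor
    rintro (i | p) h
    · exact h.1 rfl
    · exact h

/-- The number of neighbours of `v` lying in the set `F`. -/
noncomputable def degIn {V : Type*} (G : SimpleGraph V) (F : Set V) (v : V) : ℕ :=
  (G.neighborSet v ∩ F).ncard

/-- `F` is a union of (vertex sets of) connected components of `G - S`. -/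
def isComponentUnion {V : Type*} (G : SimpleGraph V) (S : Set V) (F : Set V) : Prop :=
  F ⊆ Sᶜ ∧ ∀ u v : ↥(Sᶜ : Set V), (G.induce Sᶜ).Reachable u v → (u : V) ∈ F → (v : V) ∈ F

/-- A graph has the `(a,b)`-property if it is `K_{r,s}`-minor free for all
positive `r, s` with `r + s = b + 1` and `r ≤ ω = min {a, ⌊(b+1)/2⌋}`. -/
def abProperty (a b : ℕ) {V : Type*} (G : SimpleGraph V) : Prop :=
  ∀ r s : ℕ, 0 < r → 0 < s → r + s = b + 1 → r ≤ min a ((b + 1) / 2) →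
    ¬ (completeBipartiteGraph (Fin r) (Fin s)).IsMinor G


section Aux
open Matrix

lemma rayleigh_le_sSup_spectrum {n : ℕ} (M : Matrix (Fin n) (Fin n) ℝ)
    (hM : M.IsHermitian) (y : Fin n → ℝ) (hy : y ≠ 0) :
    (y ⬝ᵥ (M *ᵥ y)) / (y ⬝ᵥ y) ≤ sSup (spectrum ℝ M) := by
  set E := EuclideanSpace ℝ (Fin n)
  let y' : E := (WithLp.equiv 2 (Fin n → ℝ)).symm y
  have hy' : y' ≠ 0 := by
    intro h; exact hy ((WithLp.toLp_eq_zero 2).1 h)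
  haveI : Nontrivial E := nontrivial_of_ne y' 0 hy'
  set T : E →ₗ[ℝ] E := Matrix.toEuclideanLin M with hT
  have hsym : T.IsSymmetric := Matrix.isHermitian_iff_isSymmetric.1 hM
  let Tc : E →L[ℝ] E := LinearMap.toContinuousLinearMap T
  have hTc : ∀ v : E, T v = Tc v := fun v => rfl
  -- uniform bound on the Rayleigh quotient
  have hquot : ∀ v : E, v ≠ 0 → (inner ℝ (T v) v : ℝ) / ‖v‖ ^ 2 ≤ ‖Tc‖ := by
    intro v hv
    have h1 : (inner ℝ (T v) v : ℝ) ≤ ‖T v‖ * ‖v‖ := real_inner_le_norm _ _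
    have h2 : ‖T v‖ ≤ ‖Tc‖ * ‖v‖ := by rw [hTc]; exact Tc.le_opNorm v
    have h3 : (0:ℝ) < ‖v‖ := norm_pos_iff.2 hv
    rw [div_le_iff₀ (by positivity)]
    calc (inner ℝ (T v) v : ℝ) ≤ ‖Tc‖ * ‖v‖ * ‖v‖ := by nlinarith [norm_nonneg (T v)]
    _ = ‖Tc‖ * ‖v‖ ^ 2 := by ring
  set μ : ℝ := ⨆ x : {x : E // x ≠ 0}, RCLike.re (inner ℝ (T x) (x:E) : ℝ) / ‖(x:E)‖ ^ 2 with hμ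
  have hev : Module.End.HasEigenvalue T μ := by
    exact hsym.hasEigenvalue_iSup_of_finiteDimensional
  have hspec : μ ∈ spectrum ℝ M := by
    rw [← Matrix.spectrum_toEuclideanLin (A := M)]
    exact Module.End.hasEigenvalue_iff_mem_spectrum.1 hev
  have hbddS : BddAbove (spectrum ℝ M) := by
    refine ⟨‖Tc‖, fun ν hν => ?_⟩
    rw [← Matrix.spectrum_toEuclideanLin (A := M)] at hν
    have hev' : Module.End.HasEigenvalue T ν := Module.End.hasEigenvalue_iff_mem_spectrum.2 hν
    obtain ⟨v, hvmem, hv0⟩ := hev'.exists_hasEigenvector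
    have : T v = ν • v := Module.End.mem_eigenspace_iff.1 hvmem
    have h4 : ‖T v‖ = |ν| * ‖v‖ := by rw [this, norm_smul]; simp
    have h2 : ‖T v‖ ≤ ‖Tc‖ * ‖v‖ := by rw [hTc]; exact Tc.le_opNorm v
    have h3 : (0:ℝ) < ‖v‖ := norm_pos_iff.2 hv0
    have : |ν| ≤ ‖Tc‖ := by nlinarith
    exact le_trans (le_abs_self ν) this
  have hbddR : BddAbove (Set.range fun x : {x : E // x ≠ 0} =>
      RCLike.re (inner ℝ (T x) (x:E) : ℝ) / ‖(x:E)‖ ^ 2) := by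
    refine ⟨‖Tc‖, fun r hr => ?_⟩
    obtain ⟨v, rfl⟩ := hr
    simpa using hquot v v.2
  have hle : (inner ℝ (T y') y' : ℝ) / ‖y'‖ ^ 2 ≤ μ := by
    have := le_ciSup hbddR (⟨y', hy'⟩ : {x : E // x ≠ 0})
    exact this
  have hfin : (inner ℝ (T y') y' : ℝ) / ‖y'‖ ^ 2 = (y ⬝ᵥ (M *ᵥ y)) / (y ⬝ᵥ y) := by
    congr 1
    · rw [← real_inner_self_eq_norm_sq, PiLp.inner_apply]
      simp only [RCLike.inner_apply, conj_trivial]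
      rfl
  calc (y ⬝ᵥ (M *ᵥ y)) / (y ⬝ᵥ y) = (inner ℝ (T y') y' : ℝ) / ‖y'‖ ^ 2 := hfin.symm
  _ ≤ μ := hle
  _ ≤ sSup (spectrum ℝ M) := le_csSup hbddS hspec
def lollipop (n b : ℕ) : SimpleGraph (Fin n) where
  Adj i j := i ≠ j ∧ (((i:ℕ) < b-1 ∧ (j:ℕ) < b-1) ∨ ((i:ℕ)+1 = (j:ℕ) ∧ b-1 ≤ (j:ℕ)) ∨
    ((j:ℕ)+1 = (i:ℕ) ∧ b-1 ≤ (i:ℕ)))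
  symm := by constructor; rintro i j ⟨h1, h2⟩; exact ⟨h1.symm, by tauto⟩
  loopless := by constructor; rintro i ⟨h1, _⟩; exact h1 rfl
lemma lollipop_adj {n b : ℕ} {i j : Fin n} : (lollipop n b).Adj i j ↔ i ≠ j ∧
    (((i:ℕ) < b-1 ∧ (j:ℕ) < b-1) ∨ ((i:ℕ)+1 = (j:ℕ) ∧ b-1 ≤ (j:ℕ)) ∨
    ((j:ℕ)+1 = (i:ℕ) ∧ b-1 ≤ (i:ℕ))) := Iff.rfl
lemma lollipop_connected {n b : ℕ} (hb : 3 ≤ b) (hn : b ≤ n) : (lollipop n b).Connected := by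
  have hn0 : 0 < n := by omega
  have key : ∀ m : ℕ, ∀ v : Fin n, (v:ℕ) = m → (lollipop n b).Reachable v ⟨0, hn0⟩ := by
    intro m
    induction m using Nat.strong_induction_on with
    | _ m ih =>
      intro v hv
      rcases Nat.eq_zero_or_pos m with hm | hm
      · have : v = ⟨0, hn0⟩ := by apply Fin.ext; simp [hv, hm]
        rw [this]
      · by_cases hcl : m < b - 1
        · refine SimpleGraph.Adj.reachable ?_
          refine ⟨?_, Or.inl ⟨by omega, by simp; omega⟩⟩
          intro h; rw [h] at hv; simp at hv; omega
        · have hm1 : m - 1 < n := by omega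
          have hadj : (lollipop n b).Adj v ⟨m-1, hm1⟩ := by
            refine ⟨?_, Or.inr (Or.inr ⟨by simp [hv]; omega, by omega⟩)⟩
            intro h; rw [h] at hv; simp at hv; omega
          exact hadj.reachable.trans (ih (m-1) (by omega) _ rfl)
  haveI : Nonempty (Fin n) := ⟨⟨0, hn0⟩⟩
  refine ⟨fun u v => ?_⟩
  exact (key _ u rfl).trans (key _ v rfl).symm
lemma lollipop_cross {n b : ℕ} {C : Set (Fin n)} {u v : ↥C}
    (W : ((lollipop n b).induce C).Walk u v) (t : ℕ) (ht : b - 1 ≤ t)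
    (hu : t < ((u : Fin n) : ℕ)) (hv : ((v : Fin n) : ℕ) < t) :
    ∃ z ∈ C, ((z : Fin n) : ℕ) = t := by
  induction W with
  | nil => omega
  | @cons a c d h W ih =>
    have hadj : (lollipop n b).Adj (a : Fin n) (c : Fin n) := h
    rcases hadj.2 with h1 | h2 | h3
    · omega
    · exact ih (by omega) hv
    · by_cases hc : ((c : Fin n) : ℕ) = t
      · exact ⟨c, c.2, hc⟩
      · exact ih (by omega) hv
lemma card_filter_val_lt {n : ℕ} (m : ℕ) (h : m ≤ n) :
    (Finset.univ.filter (fun v : Fin n => (v:ℕ) < m)).card = m := by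
  have : (Finset.univ.filter (fun v : Fin n => (v:ℕ) < m)) =
      Finset.map (Fin.castLEEmb h) Finset.univ := by
    ext v
    simp only [Finset.mem_filter, Finset.mem_univ, true_and, Finset.mem_map]
    constructor
    · intro hv
      refine ⟨⟨(v:ℕ), hv⟩, ?_⟩
      ext; simp
    · rintro ⟨a, rfl⟩; simpa using a.2
  rw [this, Finset.card_map, Finset.card_univ, Fintype.card_fin]
lemma lollipop_free {n b : ℕ} (hb : 3 ≤ b) (hn : b ≤ n) : kabMinorFree 1 b (lollipop n b) := by
  rintro ⟨f, hne, hcon, hdisj, hadj⟩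
  set C : Set (Fin n) := f (Sum.inl 0) with hC
  -- choose for each leaf a vertex of the leaf branch set adjacent to a vertex of C
  have hstar : ∀ i : Fin b, ∃ c ∈ C, ∃ w ∈ f (Sum.inr i), (lollipop n b).Adj c w := by
    intro i
    exact hadj (Sum.inl 0) (Sum.inr i) (by simp [completeBipartiteGraph])
  choose c hcC w hwf hcw using hstar
  have hwC : ∀ i, w i ∉ C := by
    intro i hi
    exact (hdisj (Sum.inl 0) (Sum.inr i) (by simp)).le_bot ⟨hi, hwf i⟩
  have hwinj : ∀ i j, i ≠ j → w i ≠ w j := by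
    intro i j hij heq
    exact (hdisj (Sum.inr i) (Sum.inr j) (by simp [hij])).le_bot ⟨hwf i, heq ▸ hwf j⟩
  -- crossing within C
  have hcross : ∀ u ∈ C, ∀ v ∈ C, ∀ t : ℕ, b - 1 ≤ t → t < (u:ℕ) → (v:ℕ) < t →
      ∃ z ∈ C, (z:ℕ) = t := by
    intro u hu v hv t ht h1 h2
    obtain ⟨W⟩ := (hcon (Sum.inl 0)).preconnected ⟨u, hu⟩ ⟨v, hv⟩
    exact lollipop_cross W t ht h1 h2
  -- path edges only, when an endpoint has value ≥ b-1
  have hedge : ∀ (a c : Fin n), (lollipop n b).Adj a c → b - 1 ≤ (a:ℕ) →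
      ((a:ℕ)+1 = (c:ℕ) ∨ (c:ℕ)+1 = (a:ℕ)) := by
    intro a c' h ha
    rcases h.2 with h1 | h2 | h3 <;> omega
  by_cases hK : ∃ k ∈ C, (k:ℕ) < b - 1
  · -- Case A : C meets the clique
    obtain ⟨k, hkC, hk⟩ := hK
    -- at most one leaf-contact vertex has value ≥ b-1
    have honeaux : ∀ i j : Fin b, b - 1 ≤ (w i:ℕ) → (w i:ℕ) < (w j:ℕ) → False := by
      intro i j hi hij
      have hadjcw := hcw j
      have hcj : b - 1 ≤ (c j:ℕ) ∨ ((c j:ℕ)+1 = (w j:ℕ) ∧ b - 1 ≤ (w j : ℕ)) := by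
        rcases (hcw j).2 with h1 | h2 | h3 <;> omega
      have hcjge : (w i:ℕ) ≤ (c j:ℕ) := by
        rcases (hcw j).2 with h1 | h2 | h3 <;> omega
      have hne : (c j) ≠ (w i) := fun h => hwC i (h ▸ hcC j)
      have hlt : (w i:ℕ) < (c j:ℕ) := by
        rcases lt_or_eq_of_le hcjge with h | h
        · exact h
        · exact absurd (Fin.ext h.symm : c j = w i) hne
      obtain ⟨z, hzC, hz⟩ := hcross (c j) (hcC j) k hkC ((w i:ℕ)) hi hlt (by omega)
      exact hwC i ((Fin.ext hz : z = w i) ▸ hzC)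
    have hone : ∀ i j : Fin b, b - 1 ≤ (w i:ℕ) → b - 1 ≤ (w j:ℕ) → i = j := by
      intro i j hi hj
      by_contra hij
      have hne := hwinj i j hij
      have : (w i:ℕ) ≠ (w j:ℕ) := fun h => hne (Fin.ext h)
      rcases lt_or_gt_of_ne this with h | h
      · exact honeaux i j hi h
      · exact honeaux j i hj h
    -- counting
    set T : Finset (Fin b) := Finset.univ.filter (fun i => (w i:ℕ) < b - 1) with hT
    have hTc : (Finset.univ.filter (fun i : Fin b => ¬ (w i:ℕ) < b - 1)).card ≤ 1 := by
      apply Finset.card_le_one.2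
      intro i hi j hj
      simp only [Finset.mem_filter] at hi hj
      exact hone i j (by omega) (by omega)
    have hTcard : b - 1 ≤ T.card := by
      have := Finset.card_filter_add_card_filter_not
        (s := (Finset.univ : Finset (Fin b))) (p := fun i => (w i:ℕ) < b - 1)
      simp only [Finset.card_univ, Fintype.card_fin] at this
      rw [← hT] at this
      omega
    have hmaps : ∀ i ∈ T, w i ∈ (Finset.univ.filter (fun v : Fin n => (v:ℕ) < b - 1)).erase k := by
      intro i hi
      simp only [hT, Finset.mem_filter] at hi
      refine Finset.mem_erase.2 ⟨fun h => hwC i (h ▸ hkC), ?_⟩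
      simp [hi.2]
    have hinj : Set.InjOn w T := by
      intro i _ j _ hij
      by_contra h
      exact hwinj i j h hij
    have hcard := Finset.card_le_card_of_injOn w hmaps hinj
    rw [Finset.card_erase_of_mem (by simp [hk]), card_filter_val_lt (b-1) (by omega)] at hcard
    omega
  · -- Case B : C lies entirely in the path part
    push_neg at hK
    obtain ⟨k0, hk0⟩ := hne (Sum.inl 0)
    have hfin : C.Finite := Set.toFinite C
    set cf : Finset (Fin n) := hfin.toFinset with hcf
    have hcfne : cf.Nonempty := ⟨k0, hfin.mem_toFinset.2 hk0⟩
    set L : Fin n := cf.min' hcfne with hL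
    set R : Fin n := cf.max' hcfne with hR
    have hLC : L ∈ C := hfin.mem_toFinset.1 (cf.min'_mem hcfne)
    have hRC : R ∈ C := hfin.mem_toFinset.1 (cf.max'_mem hcfne)
    have hLb : ∀ z ∈ C, (L:ℕ) ≤ (z:ℕ) := by
      intro z hz; exact cf.min'_le z (hfin.mem_toFinset.2 hz)
    have hRb : ∀ z ∈ C, (z:ℕ) ≤ (R:ℕ) := by
      intro z hz; exact cf.le_max' z (hfin.mem_toFinset.2 hz)
    have hLge : b - 1 ≤ (L:ℕ) := hK L hLC
    -- every leaf-contact vertex has value L-1 or R+1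
    have hval : ∀ i : Fin b, (w i:ℕ) + 1 = (L:ℕ) ∨ (w i:ℕ) = (R:ℕ) + 1 := by
      intro i
      have hciC := hcC i
      have hci_ge : b - 1 ≤ (c i:ℕ) := hK _ hciC
      have hpath := hedge (c i) (w i) (hcw i) hci_ge
      have hciL := hLb _ hciC
      have hciR := hRb _ hciC
      rcases hpath with h1 | h2
      · -- w i = c i + 1 : show c i = R
        right
        rcases Nat.lt_or_ge (w i:ℕ) ((R:ℕ)+1) with hlt | hge
        · exfalso
          by_cases hwR : (w i:ℕ) = (R:ℕ)
          · exact hwC i ((Fin.ext hwR : w i = R) ▸ hRC)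
          · obtain ⟨z, hzC, hz⟩ := hcross R hRC (c i) hciC ((w i:ℕ)) (by omega) (by omega) (by omega)
            exact hwC i ((Fin.ext hz : z = w i) ▸ hzC)
        · omega
      · left
        rcases Nat.lt_or_ge ((L:ℕ)) ((w i:ℕ)+1) with hlt | hge
        · exfalso
          by_cases hwL : (w i:ℕ) = (L:ℕ)
          · exact hwC i ((Fin.ext hwL : w i = L) ▸ hLC)
          · obtain ⟨z, hzC, hz⟩ := hcross (c i) hciC L hLC ((w i:ℕ)) (by omega) (by omega) (by omega)
            exact hwC i ((Fin.ext hz : z = w i) ▸ hzC)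
        · omega
    -- three distinct leaves, only two possible values: contradiction
    have key : ∀ i j : Fin b, i ≠ j → (w i:ℕ) ≠ (w j:ℕ) :=
      fun i j hij h => hwinj i j hij (Fin.ext h)
    have d01 : (⟨0, by omega⟩ : Fin b) ≠ ⟨1, by omega⟩ := by intro h; simp [Fin.ext_iff] at h
    have d02 : (⟨0, by omega⟩ : Fin b) ≠ ⟨2, by omega⟩ := by intro h; simp [Fin.ext_iff] at h
    have d12 : (⟨1, by omega⟩ : Fin b) ≠ ⟨2, by omega⟩ := by intro h; simp [Fin.ext_iff] at h
    rcases hval ⟨0, by omega⟩ with h0 | h0 <;> rcases hval ⟨1, by omega⟩ with h1 | h1 <;>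
      rcases hval ⟨2, by omega⟩ with h2 | h2
    all_goals first
      | exact key _ _ d01 (by omega)
      | exact key _ _ d02 (by omega)
      | exact key _ _ d12 (by omega)
lemma aMatrix_isHermitian {V : Type*} [Fintype V] (G : SimpleGraph V) (α : ℝ) :
    (aMatrix G α).IsHermitian := by
  ext i j
  simp only [Matrix.conjTranspose_apply, aMatrix, Matrix.of_apply, star_trivial]
  by_cases h : i = j
  · subst h; rfl
  · simp only [h, Ne.symm h, if_false]
    rw [G.adj_comm]
lemma aMatrix_quadform {V : Type*} [Fintype V] (G : SimpleGraph V) (α : ℝ) (y : V → ℝ) :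
    y ⬝ᵥ (aMatrix G α *ᵥ y) =
      ∑ u, ∑ w, if G.Adj u w then α * y u ^ 2 + (1 - α) * (y u * y w) else 0 := by
  have hconst : ∀ (u : V) (k : ℝ), (∑ w, if G.Adj u w then k else 0)
      = k * ∑ w, if G.Adj u w then (1:ℝ) else 0 := by
    intro u k
    rw [Finset.mul_sum]
    exact Finset.sum_congr rfl fun w _ => by split_ifs <;> ring
  have expand : ∀ u, (aMatrix G α *ᵥ y) u =
      α * (∑ z, if G.Adj u z then (1:ℝ) else 0) * y u
      + (1 - α) * ∑ w, (if G.Adj u w then y w else 0) := by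
    intro u
    simp only [Matrix.mulVec, dotProduct, aMatrix, Matrix.of_apply, add_mul]
    rw [Finset.sum_add_distrib]
    congr 1
    · simp only [ite_mul, zero_mul]
      rw [Finset.sum_ite_eq]
      simp
    · rw [Finset.mul_sum]
      exact Finset.sum_congr rfl fun w _ => by split_ifs <;> ring
  calc y ⬝ᵥ (aMatrix G α *ᵥ y) = ∑ u, y u * ((aMatrix G α *ᵥ y) u) := rfl
  _ = ∑ u, ∑ w, ((if G.Adj u w then α * y u ^ 2 else 0)
        + (if G.Adj u w then (1 - α) * (y u * y w) else 0)) := by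
      refine Finset.sum_congr rfl fun u _ => ?_
      rw [expand u, mul_add, Finset.sum_add_distrib]
      congr 1
      · rw [hconst u (α * y u ^ 2)]
        ring
      · simp only [Finset.mul_sum]
        exact Finset.sum_congr rfl fun w _ => by split_ifs <;> ring
  _ = _ := by
      refine Finset.sum_congr rfl fun u _ => Finset.sum_congr rfl fun w _ => ?_
      split_ifs <;> ring
lemma lollipop_spectral_lower {n b : ℕ} (hb : 3 ≤ b) (hn : b ≤ n)
    (α : ℝ) (hα0 : 0 ≤ α) (hα1 : α < 1) :
    ((b:ℝ) - 2) < sSup (spectrum ℝ (aMatrix (lollipop n b) α)) := by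
  have hbR : (3:ℝ) ≤ (b:ℝ) := by exact_mod_cast hb
  set ε : ℝ := 1 / ((b:ℝ) - 2) with hε
  have hb2 : (1:ℝ) ≤ (b:ℝ) - 2 := by linarith
  have hε0 : 0 < ε := by rw [hε]; positivity
  have hε1 : ((b:ℝ) - 2) * ε = 1 := by rw [hε]; field_simp
  have hεle : ε ≤ 1 := by rw [hε]; rw [div_le_one (by linarith)]; linarith
  set y : Fin n → ℝ := fun v => if (v:ℕ) < b-1 then 1 else if (v:ℕ) = b-1 then ε else 0 with hy
  have hy0 : ∀ v, 0 ≤ y v := by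
    intro v; rw [hy]; dsimp only; split_ifs <;> linarith
  have hp : b - 2 < n := by omega
  have hq : b - 1 < n := by omega
  have hyne : y ≠ 0 := by
    intro h
    have := congrFun h ⟨0, by omega⟩
    rw [hy] at this
    simp only at this
    rw [if_pos (by simp; omega)] at this
    simpa using this
  -- pointwise lower bound on the quadratic form summand
  have hpoint : ∀ u w : Fin n,
      ((if ((u:ℕ) < b-1 ∧ (w:ℕ) < b-1 ∧ u ≠ w) then (1:ℝ) else 0)
       + (if ((u:ℕ) = b-2 ∧ (w:ℕ) = b-1) then α + (1-α)*ε else 0)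
       + (if ((u:ℕ) = b-1 ∧ (w:ℕ) = b-2) then α*ε^2 + (1-α)*ε else 0))
      ≤ (if (lollipop n b).Adj u w then α * y u ^ 2 + (1 - α) * (y u * y w) else 0) := by
    intro u w
    by_cases h1 : (u:ℕ) < b-1 ∧ (w:ℕ) < b-1 ∧ u ≠ w
    · have hadj : (lollipop n b).Adj u w := ⟨h1.2.2, Or.inl ⟨h1.1, h1.2.1⟩⟩
      rw [if_pos h1, if_pos hadj, if_neg (by omega), if_neg (by omega)]
      have hyu : y u = 1 := by rw [hy]; exact if_pos h1.1
      have hyw : y w = 1 := by rw [hy]; exact if_pos h1.2.1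
      rw [hyu, hyw]; nlinarith
    · rw [if_neg h1]
      by_cases h2 : (u:ℕ) = b-2 ∧ (w:ℕ) = b-1
      · have hne : u ≠ w := by intro h; rw [h] at h2; omega
        have hadj : (lollipop n b).Adj u w := ⟨hne, Or.inr (Or.inl ⟨by omega, by omega⟩)⟩
        rw [if_pos h2, if_neg (by omega), if_pos hadj]
        have hyu : y u = 1 := by rw [hy]; exact if_pos (by omega)
        have hyw : y w = ε := by rw [hy]; dsimp only; rw [if_neg (by omega), if_pos h2.2]
        rw [hyu, hyw]; nlinarith
      · rw [if_neg h2]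
        by_cases h3 : (u:ℕ) = b-1 ∧ (w:ℕ) = b-2
        · have hne : u ≠ w := by intro h; rw [h] at h3; omega
          have hadj : (lollipop n b).Adj u w := ⟨hne, Or.inr (Or.inr ⟨by omega, by omega⟩)⟩
          rw [if_pos h3, if_pos hadj]
          have hyu : y u = ε := by rw [hy]; dsimp only; rw [if_neg (by omega), if_pos h3.1]
          have hyw : y w = 1 := by rw [hy]; exact if_pos (by omega)
          rw [hyu, hyw]; nlinarith
        · rw [if_neg h3]
          simp only [add_zero, zero_add]
          split_ifs
          · nlinarith [mul_nonneg (hy0 u) (hy0 w), sq_nonneg (y u)]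
          · exact le_refl 0
  -- helper for sums with an equality condition on both coordinates
  have hsingle2 : ∀ (a c : ℕ) (k : ℝ), a < n → c < n →
      (∑ u : Fin n, ∑ w : Fin n, if ((u:ℕ) = a ∧ (w:ℕ) = c) then k else 0) = k := by
    intro a c k ha hc
    rw [Finset.sum_eq_single (⟨a, ha⟩ : Fin n)]
    · rw [Finset.sum_eq_single (⟨c, hc⟩ : Fin n)]
      · simp
      · intro w _ hw; rw [if_neg]; rintro ⟨-, h⟩; exact hw (Fin.ext h)
      · intro h; exact absurd (Finset.mem_univ _) h
    · intro u _ hu; apply Finset.sum_eq_zero; intro w _; rw [if_neg]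
      rintro ⟨h, -⟩; exact hu (Fin.ext h)
    · intro h; exact absurd (Finset.mem_univ _) h
  -- the clique double sum
  have hclique : (∑ u : Fin n, ∑ w : Fin n,
      if ((u:ℕ) < b-1 ∧ (w:ℕ) < b-1 ∧ u ≠ w) then (1:ℝ) else 0)
      = ((b:ℝ) - 1) * ((b:ℝ) - 2) := by
    have hrow : ∀ u : Fin n, (∑ w : Fin n, if ((u:ℕ) < b-1 ∧ (w:ℕ) < b-1 ∧ u ≠ w) then (1:ℝ) else 0)
        = if (u:ℕ) < b-1 then ((b:ℝ) - 2) else 0 := by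
      intro u
      by_cases hu : (u:ℕ) < b-1
      · rw [if_pos hu]
        have hset : (Finset.univ.filter fun w : Fin n => ((u:ℕ) < b-1 ∧ (w:ℕ) < b-1 ∧ u ≠ w))
            = (Finset.univ.filter fun w : Fin n => (w:ℕ) < b-1).erase u := by
          ext w
          simp only [Finset.mem_filter, Finset.mem_erase, Finset.mem_univ, true_and]
          constructor
          · rintro ⟨-, h1, h2⟩; exact ⟨fun h => h2 h.symm, h1⟩
          · rintro ⟨h1, h2⟩; exact ⟨hu, h2, fun h => h1 h.symm⟩
        rw [Finset.sum_boole, hset, Finset.card_erase_of_mem (by simp [hu]),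
          card_filter_val_lt (b-1) (by omega)]
        have : ((b - 1 - 1 : ℕ) : ℝ) = (b:ℝ) - 2 := by
          have : b - 1 - 1 = b - 2 := by omega
          rw [this]; push_cast [Nat.cast_sub (by omega : 2 ≤ b)]; ring
        rw [this]
      · rw [if_neg hu]
        apply Finset.sum_eq_zero; intro w _; rw [if_neg]; tauto
    rw [Finset.sum_congr rfl (fun u _ => hrow u)]
    have : (∑ u : Fin n, if (u:ℕ) < b-1 then ((b:ℝ) - 2) else 0)
        = ((b:ℝ)-2) * ∑ u : Fin n, if (u:ℕ) < b-1 then (1:ℝ) else 0 := by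
      rw [Finset.mul_sum]; exact Finset.sum_congr rfl fun u _ => by split_ifs <;> ring
    rw [this, Finset.sum_boole, card_filter_val_lt (b-1) (by omega)]
    have : ((b - 1 : ℕ) : ℝ) = (b:ℝ) - 1 := by push_cast [Nat.cast_sub (by omega : 1 ≤ b)]; ring
    rw [this]; ring
  -- lower bound for the numerator
  set M := aMatrix (lollipop n b) α with hM
  have hnum : ((b:ℝ) - 1) * ((b:ℝ) - 2) + (α + (1-α)*ε) + (α*ε^2 + (1-α)*ε)
      ≤ y ⬝ᵥ (M *ᵥ y) := by
    rw [hM, aMatrix_quadform]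
    have hsum : (∑ u : Fin n, ∑ w : Fin n,
        ((if ((u:ℕ) < b-1 ∧ (w:ℕ) < b-1 ∧ u ≠ w) then (1:ℝ) else 0)
         + (if ((u:ℕ) = b-2 ∧ (w:ℕ) = b-1) then α + (1-α)*ε else 0)
         + (if ((u:ℕ) = b-1 ∧ (w:ℕ) = b-2) then α*ε^2 + (1-α)*ε else 0)))
        ≤ ∑ u : Fin n, ∑ w : Fin n,
          if (lollipop n b).Adj u w then α * y u ^ 2 + (1 - α) * (y u * y w) else 0 :=
      Finset.sum_le_sum fun u _ => Finset.sum_le_sum fun w _ => hpoint u w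
    refine le_trans (le_of_eq ?_) hsum
    simp only [Finset.sum_add_distrib]
    rw [hclique, hsingle2 (b-2) (b-1) _ hp hq, hsingle2 (b-1) (b-2) _ hq hp]
  -- the denominator
  have hden : y ⬝ᵥ y = ((b:ℝ) - 1) + ε * ε := by
    have hpt : ∀ v : Fin n, y v * y v =
        (if (v:ℕ) < b-1 then (1:ℝ) else 0) + (if (v:ℕ) = b-1 then ε*ε else 0) := by
      intro v
      rw [hy]; dsimp only
      split_ifs <;> first | (exfalso; omega) | ring
    calc y ⬝ᵥ y = ∑ v : Fin n, y v * y v := rfl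
    _ = ∑ v : Fin n, ((if (v:ℕ) < b-1 then (1:ℝ) else 0)
          + (if (v:ℕ) = b-1 then ε*ε else 0)) :=
        Finset.sum_congr rfl fun v _ => hpt v
    _ = ((b:ℝ) - 1) + ε * ε := by
        rw [Finset.sum_add_distrib, Finset.sum_boole, card_filter_val_lt (b-1) (by omega)]
        congr 1
        · push_cast [Nat.cast_sub (by omega : 1 ≤ b)]; ring
        · rw [Finset.sum_eq_single (⟨b-1, hq⟩ : Fin n)]
          · simp
          · intro v _ hv; rw [if_neg]; intro h; exact hv (Fin.ext h)
          · intro h; exact absurd (Finset.mem_univ _) h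
  -- conclude
  have hden0 : 0 < y ⬝ᵥ y := by rw [hden]; nlinarith
  have hQ : ((b:ℝ) - 2) < (y ⬝ᵥ (M *ᵥ y)) / (y ⬝ᵥ y) := by
    rw [lt_div_iff₀ hden0, hden]
    nlinarith [sq_nonneg (1 - ε), hε1, hε0, hεle, hα0, hα1]
  exact lt_of_lt_of_le hQ (rayleigh_le_sSup_spectrum M (by rw [hM]; exact aMatrix_isHermitian _ _) y hyne)

lemma induce_singleton_connected {V : Type*} (G : SimpleGraph V) (v : V) :
    (G.induce ({v} : Set V)).Connected := by
  haveI : Nonempty ({v} : Set V) := ⟨⟨v, rfl⟩⟩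
  refine ⟨fun a c => ?_⟩
  have : a = c := Subtype.ext (a.2.trans c.2.symm)
  rw [this]

lemma aMatrix_mulVec_apply {V : Type*} [Fintype V] (G : SimpleGraph V) (α : ℝ)
    (x : V → ℝ) (u : V) :
    (aMatrix G α *ᵥ x) u = α * (∑ z, if G.Adj u z then (1:ℝ) else 0) * x u
      + (1 - α) * ∑ w, (if G.Adj u w then x w else 0) := by
  simp only [Matrix.mulVec, dotProduct, aMatrix, Matrix.of_apply, add_mul]
  rw [Finset.sum_add_distrib]
  congr 1
  · simp only [ite_mul, zero_mul]
    rw [Finset.sum_ite_eq]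
    simp
  · rw [Finset.mul_sum]
    exact Finset.sum_congr rfl fun w _ => by split_ifs <;> ring


end Aux

open Matrix

/-- In an `A_α`-extremal connected `K_{1,b}`-minor free graph on `n ≥ b ≥ 3`
vertices, a vertex of maximal Perron entry has degree exactly `b - 1`. -/
theorem extremal_K1b_max_perron_vertex_degree
    (n b : ℕ) (hn : b ≤ n) (hb : 3 ≤ b)
    (α : ℝ) (hα0 : 0 ≤ α) (hα1 : α < 1)
    (G : SimpleGraph (Fin n)) (hconn : G.Connected) (hfree : kabMinorFree 1 b G)
    (hmax : ∀ H : SimpleGraph (Fin n), H.Connected → kabMinorFree 1 b H →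
      lambdaAlpha H α ≤ lambdaAlpha G α)
    (x : Fin n → ℝ) (hx : ∀ v, 0 < x v)
    (heig : (aMatrix G α).mulVec x = lambdaAlpha G α • x)
    (vstar : Fin n) (hvstar : ∀ u, x u ≤ x vstar) :
    (G.neighborSet vstar).ncard = b - 1 := by
  classical
  have hub : (G.neighborSet vstar).ncard ≤ b - 1 := by
    by_contra hub'
    have hfinset : (Finset.univ.filter fun z => G.Adj vstar z).card
        = (G.neighborSet vstar).ncard := by
      rw [Set.ncard_eq_toFinset_card']
      congr 1
      ext z
      simp [SimpleGraph.mem_neighborSet]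
    have hbd : b ≤ (Finset.univ.filter fun z => G.Adj vstar z).card := by omega
    obtain ⟨t, hts, htc⟩ := Finset.exists_subset_card_eq hbd
    set e : Fin b → Fin n := fun i => ((t.equivFinOfCardEq htc).symm i : Fin n) with he
    have headj : ∀ i, G.Adj vstar (e i) := by
      intro i
      have hm := hts ((t.equivFinOfCardEq htc).symm i).2
      simpa using hm
    have heinj : Function.Injective e := by
      intro i j h
      have : (t.equivFinOfCardEq htc).symm i = (t.equivFinOfCardEq htc).symm j :=
        Subtype.ext h
      exact (t.equivFinOfCardEq htc).symm.injective this
    apply hfree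
    refine ⟨Sum.elim (fun _ => {vstar}) (fun i => {e i}), ?_, ?_, ?_, ?_⟩
    · rintro (i | i) <;> exact ⟨_, rfl⟩
    · rintro (i | i) <;> exact induce_singleton_connected _ _
    · rintro (i | i) (j | j) hne
      · exact absurd (congrArg Sum.inl (Subsingleton.elim i j)) hne
      · simp only [Sum.elim_inl, Sum.elim_inr, Set.disjoint_singleton]
        exact G.ne_of_adj (headj j)
      · simp only [Sum.elim_inl, Sum.elim_inr, Set.disjoint_singleton]
        exact fun h => G.ne_of_adj (headj i) h.symm
      · simp only [Sum.elim_inr, Set.disjoint_singleton]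
        intro h
        exact (fun hij => hij (congrArg Sum.inr (heinj h))) hne
    · rintro (i | i) (j | j) hadj
      · simp at hadj
      · exact ⟨vstar, rfl, e j, rfl, headj j⟩
      · exact ⟨e i, rfl, vstar, rfl, (headj i).symm⟩
      · simp at hadj
  have hlb : b - 1 ≤ (G.neighborSet vstar).ncard := by
    by_contra hlb'
    have hd2 : (G.neighborSet vstar).ncard ≤ b - 2 := by omega
    have hfinset : (Finset.univ.filter fun z => G.Adj vstar z).card
        = (G.neighborSet vstar).ncard := by
      rw [Set.ncard_eq_toFinset_card']
      congr 1
      ext z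
      simp [SimpleGraph.mem_neighborSet]
    set lam := lambdaAlpha G α with hlam
    have h0 : (aMatrix G α *ᵥ x) vstar = lam * x vstar := by
      rw [heig]; simp [hlam]
    rw [aMatrix_mulVec_apply] at h0
    have hdeg : (∑ z, if G.Adj vstar z then (1:ℝ) else 0)
        = (((G.neighborSet vstar).ncard : ℕ) : ℝ) := by
      rw [Finset.sum_boole, hfinset]
    have hsum_le : (∑ w, if G.Adj vstar w then x w else 0)
        ≤ (((G.neighborSet vstar).ncard : ℕ) : ℝ) * x vstar := by
      have h1 : (∑ w, if G.Adj vstar w then x w else 0)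
          ≤ ∑ w, if G.Adj vstar w then x vstar else 0 := by
        refine Finset.sum_le_sum fun w _ => ?_
        split_ifs
        · exact hvstar w
        · exact le_refl 0
      have h2 : (∑ w, if G.Adj vstar w then x vstar else 0)
          = (∑ w, if G.Adj vstar w then (1:ℝ) else 0) * x vstar := by
        rw [Finset.sum_mul]
        exact Finset.sum_congr rfl fun w _ => by split_ifs <;> ring
      rw [h2, hdeg] at h1
      exact h1
    have hxpos := hx vstar
    have hdle : (((G.neighborSet vstar).ncard : ℕ) : ℝ) ≤ (b:ℝ) - 2 := by
      have h3 : ((G.neighborSet vstar).ncard : ℝ) ≤ ((b - 2 : ℕ) : ℝ) := by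
        exact_mod_cast hd2
      have h4 : ((b - 2 : ℕ) : ℝ) = (b:ℝ) - 2 := by
        rw [Nat.cast_sub (by omega : 2 ≤ b)]; norm_num
      linarith
    have hlamle : lam ≤ (b:ℝ) - 2 := by
      have hmul : lam * x vstar ≤ ((b:ℝ) - 2) * x vstar := by
        rw [← h0, hdeg]
        have e1 : (1 - α) * (∑ w, if G.Adj vstar w then x w else 0)
            ≤ (1 - α) * ((((G.neighborSet vstar).ncard : ℕ):ℝ) * x vstar) :=
          mul_le_mul_of_nonneg_left hsum_le (by linarith)
        nlinarith [mul_le_mul_of_nonneg_right hdle hxpos.le]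
      exact le_of_mul_le_mul_right hmul hxpos
    have hH := hmax (lollipop n b) (lollipop_connected hb hn) (lollipop_free hb hn)
    have hlow := lollipop_spectral_lower hb hn α hα0 hα1
    have hHsup : sSup (spectrum ℝ (aMatrix (lollipop n b) α)) ≤ lam := hH
    linarith
  omega
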